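/- arXiv:1510.02366 — 2 statements merged into one kernel-verified Lean document; each statement's English description precedes it below -/
import Mathlib

section
/- Let s ∈ (0, 1/2), let Ω ⊆ ℝ³ be a measurable set, let D₁, …, D_N ⊆ Ω be pairwise disjoint measurable sets, and let c₁, …, c_N be real numbers. Define f := Σ_{j=1}^N c_j χ_{D_j}. Then [f]_{H^s(Ω)}² ≤ 2 Σ_{j=1}^N c_j² [χ_{D_j}]_{H^s(Ω)}². -/
open MeasureTheory
open scoped ENNReal

/-- The squared Gagliardo `H^s(Ω)` seminorm of `f : ℝ³ → ℝ`,
`[f]_{H^s(Ω)}² = ∫_Ω ∫_Ω |f x − f y|² / |x − y|^{3+2s} dx dy`,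
computed in `[0,∞]` with respect to Lebesgue measure. -/
noncomputable def gagliardoSq (s : ℝ) (Ω : Set (EuclideanSpace ℝ (Fin 3)))
    (f : EuclideanSpace ℝ (Fin 3) → ℝ) : ℝ≥0∞ :=
  ∫⁻ x in Ω, ∫⁻ y in Ω, ENNReal.ofReal ((f x - f y) ^ 2 / ‖x - y‖ ^ (3 + 2 * s))

private lemma key_ptwise {N : ℕ} (D : Fin N → Set (EuclideanSpace ℝ (Fin 3)))
    (hdisj : Pairwise fun i j => Disjoint (D i) (D j))
    (c : Fin N → ℝ) (x y : EuclideanSpace ℝ (Fin 3)) :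
    (∑ j, c j * ((D j).indicator 1 x - (D j).indicator 1 y)) ^ 2
      ≤ ∑ j, 2 * (c j) ^ 2 * ((D j).indicator 1 x - (D j).indicator 1 y) ^ 2 := by
  classical
  set a : Fin N → ℝ := fun j => c j * ((D j).indicator 1 x - (D j).indicator 1 y) with ha
  set T : Finset (Fin N) := Finset.univ.filter fun j => a j ≠ 0 with hT
  have hux : ∀ j j', x ∈ D j → x ∈ D j' → j = j' := by
    intro j j' h h'
    by_contra hne
    exact (Set.disjoint_left.mp (hdisj hne)) h h'
  have huy : ∀ j j', y ∈ D j → y ∈ D j' → j = j' := by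
    intro j j' h h'
    by_contra hne
    exact (Set.disjoint_left.mp (hdisj hne)) h h'
  have hmem : ∀ j ∈ T, x ∈ D j ∨ y ∈ D j := by
    intro j hj
    by_contra h
    push_neg at h
    simp [hT, ha, Set.indicator_of_notMem h.1, Set.indicator_of_notMem h.2] at hj
  have hcard : T.card ≤ 2 := by
    by_contra h
    push_neg at h
    obtain ⟨i1, hi1, i2, hi2, i3, hi3, h12, h13, h23⟩ := Finset.two_lt_card.mp h
    rcases hmem i1 hi1 with h1 | h1 <;> rcases hmem i2 hi2 with h2 | h2 <;>
      rcases hmem i3 hi3 with h3 | h3 <;>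
      first
        | exact h12 (hux _ _ h1 h2) | exact h13 (hux _ _ h1 h3)
        | exact h23 (hux _ _ h2 h3) | exact h12 (huy _ _ h1 h2)
        | exact h13 (huy _ _ h1 h3) | exact h23 (huy _ _ h2 h3)
  have hsum : ∑ j, a j = ∑ j ∈ T, a j := by
    rw [hT, Finset.sum_filter_ne_zero]
  calc (∑ j, a j) ^ 2 = (∑ j ∈ T, a j) ^ 2 := by rw [hsum]
    _ ≤ (T.card : ℝ) * ∑ j ∈ T, a j ^ 2 := sq_sum_le_card_mul_sum_sq
    _ ≤ 2 * ∑ j ∈ T, a j ^ 2 := by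
        apply mul_le_mul_of_nonneg_right
        · exact_mod_cast hcard
        · exact Finset.sum_nonneg fun j _ => sq_nonneg _
    _ ≤ 2 * ∑ j, a j ^ 2 := by
        apply mul_le_mul_of_nonneg_left _ (by norm_num)
        exact Finset.sum_le_sum_of_subset_of_nonneg (Finset.filter_subset _ _)
          (fun j _ _ => sq_nonneg _)
    _ = ∑ j, 2 * (c j) ^ 2 * ((D j).indicator 1 x - (D j).indicator 1 y) ^ 2 := by
        rw [Finset.mul_sum]
        exact Finset.sum_congr rfl fun j _ => by simp [ha]; ring

set_option maxHeartbeats 1000000 in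
/-- Inequality (Hsbound2) in the proof of Lemma 2.5: for pairwise disjoint
`D₁, …, D_N ⊆ Ω` and `f = Σ_j c_j χ_{D_j}`,
`[f]_{H^s(Ω)}² ≤ 2 Σ_j c_j² [χ_{D_j}]_{H^s(Ω)}²`. -/
theorem stmt4 (s : ℝ) (hs : s ∈ Set.Ioo (0 : ℝ) (1 / 2))
    (Ω : Set (EuclideanSpace ℝ (Fin 3))) (hΩ : MeasurableSet Ω)
    (N : ℕ) (D : Fin N → Set (EuclideanSpace ℝ (Fin 3)))
    (hDmeas : ∀ j, MeasurableSet (D j))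
    (hDsub : ∀ j, D j ⊆ Ω)
    (hdisj : Pairwise fun i j => Disjoint (D i) (D j))
    (c : Fin N → ℝ) :
    gagliardoSq s Ω (fun x => ∑ j, c j * (D j).indicator 1 x)
      ≤ 2 * ∑ j, ENNReal.ofReal ((c j) ^ 2) * gagliardoSq s Ω ((D j).indicator 1) := by
  classical
  simp only [gagliardoSq]
  set p : ℝ := 3 + 2 * s with hp
  set g : Fin N → EuclideanSpace ℝ (Fin 3) → EuclideanSpace ℝ (Fin 3) → ℝ≥0∞ :=
    fun j x y => ENNReal.ofReal
      (((D j).indicator 1 x - (D j).indicator 1 y) ^ 2 / ‖x - y‖ ^ p) with hg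
  have hgmeas : ∀ j, Measurable (fun q : EuclideanSpace ℝ (Fin 3) × EuclideanSpace ℝ (Fin 3)
      => g j q.1 q.2) := by
    intro j
    apply ENNReal.measurable_ofReal.comp
    apply Measurable.div
    · exact (((measurable_one.indicator (hDmeas j)).comp measurable_fst).sub
        ((measurable_one.indicator (hDmeas j)).comp measurable_snd)).pow_const 2
    · exact ((measurable_fst.sub measurable_snd).norm).pow_const p
  -- pointwise bound
  have hpt : ∀ x y : EuclideanSpace ℝ (Fin 3),
      ENNReal.ofReal (((∑ j, c j * (D j).indicator 1 x) - ∑ j, c j * (D j).indicator 1 y) ^ 2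
        / ‖x - y‖ ^ p)
      ≤ ∑ j, 2 * ENNReal.ofReal ((c j) ^ 2) * g j x y := by
    intro x y
    have hdinv : (0 : ℝ) ≤ (‖x - y‖ ^ p)⁻¹ :=
      inv_nonneg.mpr (Real.rpow_nonneg (norm_nonneg _) _)
    have h1 : ((∑ j, c j * (D j).indicator 1 x) - ∑ j, c j * (D j).indicator 1 y) ^ 2
        / ‖x - y‖ ^ p
        ≤ ∑ j, 2 * (c j) ^ 2 * ((D j).indicator 1 x - (D j).indicator 1 y) ^ 2
          * (‖x - y‖ ^ p)⁻¹ := by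
      rw [div_eq_mul_inv, ← Finset.sum_mul]
      apply mul_le_mul_of_nonneg_right _ hdinv
      rw [← Finset.sum_sub_distrib]
      simp_rw [← mul_sub]
      exact key_ptwise D hdisj c x y
    refine le_trans (ENNReal.ofReal_le_ofReal h1) ?_
    rw [ENNReal.ofReal_sum_of_nonneg (fun j _ => by positivity)]
    apply Finset.sum_le_sum
    intro j _
    have : 2 * (c j) ^ 2 * ((D j).indicator 1 x - (D j).indicator 1 y) ^ 2
        * (‖x - y‖ ^ p)⁻¹
        = 2 * ((c j) ^ 2 * (((D j).indicator 1 x - (D j).indicator 1 y) ^ 2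
          / ‖x - y‖ ^ p)) := by ring
    rw [this, ENNReal.ofReal_mul (by norm_num), ENNReal.ofReal_mul (sq_nonneg _)]
    simp [hg, mul_assoc]
  -- integrate
  have hne : ∀ j, (2 : ℝ≥0∞) * ENNReal.ofReal ((c j) ^ 2) ≠ ⊤ := by
    intro j
    exact ENNReal.mul_ne_top (by norm_num) ENNReal.ofReal_ne_top
  calc ∫⁻ x in Ω, ∫⁻ y in Ω, ENNReal.ofReal
        (((∑ j, c j * (D j).indicator 1 x) - ∑ j, c j * (D j).indicator 1 y) ^ 2 / ‖x - y‖ ^ p)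
      ≤ ∫⁻ x in Ω, ∫⁻ y in Ω, ∑ j, 2 * ENNReal.ofReal ((c j) ^ 2) * g j x y := by
        exact lintegral_mono fun x => lintegral_mono fun y => hpt x y
    _ = ∫⁻ x in Ω, ∑ j, 2 * ENNReal.ofReal ((c j) ^ 2) * ∫⁻ y in Ω, g j x y := by
        refine lintegral_congr fun x => ?_
        have hm : ∀ j, Measurable fun y => g j x y := by
          intro j
          apply ENNReal.measurable_ofReal.comp
          apply Measurable.div
          · exact (measurable_const.sub (measurable_one.indicator (hDmeas j))).pow_const 2
          · exact ((measurable_id.const_sub x).norm).pow_const p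
        rw [lintegral_finset_sum _ fun j _ => (hm j).const_mul _]
        exact Finset.sum_congr rfl fun j _ => lintegral_const_mul' _ _ (hne j)
    _ = ∑ j, 2 * ENNReal.ofReal ((c j) ^ 2) * ∫⁻ x in Ω, ∫⁻ y in Ω, g j x y := by
        rw [lintegral_finset_sum _ fun j _ =>
          Measurable.const_mul ((hgmeas j).lintegral_prod_right') _]
        exact Finset.sum_congr rfl fun j _ => lintegral_const_mul' _ _ (hne j)
    _ = 2 * ∑ j, ENNReal.ofReal ((c j) ^ 2) * ∫⁻ x in Ω, ∫⁻ y in Ω,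
          ENNReal.ofReal (((D j).indicator 1 x - (D j).indicator 1 y) ^ 2 / ‖x - y‖ ^ p) := by
        rw [Finset.mul_sum]
        exact Finset.sum_congr rfl fun j _ => by rw [mul_assoc]
end

section
/- Let D ⊆ ℝ³ be a bounded measurable set of positive finite Lebesgue measure |D|, let s ∈ (0, 1/2), and let P > 0 be such that the Lebesgue measure of { x ∈ D : dist(x, ∂D) < r } is at most P·r for every r > 0. Then ∫_D dist(x, ∂D)^{−2s} dx ≤ |D|^{1−2s} P^{2s} / (1 − 2s). -/
open MeasureTheory
open scoped ENNReal

/-- Layer-cake estimate on the negative power of the distance to the boundary,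
the analytic core of the Magnanini–Papi bound used in Lemma 2.5: if
`|{x ∈ D : dist(x,∂D) < r}| ≤ P r` for all `r > 0`, then
`∫_D dist(x,∂D)^{−2s} dx ≤ |D|^{1−2s} P^{2s} / (1−2s)`. -/
theorem stmt7 (D : Set (EuclideanSpace ℝ (Fin 3)))
    (hDmeas : MeasurableSet D) (hDbdd : Bornology.IsBounded D)
    (hDpos : 0 < volume D) (hDfin : volume D < ⊤)
    (s : ℝ) (hs : s ∈ Set.Ioo (0 : ℝ) (1 / 2))
    (P : ℝ) (hP : 0 < P)
    (hlayer : ∀ r : ℝ, 0 < r →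
      volume {x ∈ D | Metric.infDist x (frontier D) < r} ≤ ENNReal.ofReal (P * r)) :
    (∫⁻ x in D, (ENNReal.ofReal (Metric.infDist x (frontier D))) ^ (-(2 * s)))
      ≤ ENNReal.ofReal
          ((volume D).toReal ^ (1 - 2 * s) * P ^ (2 * s) / (1 - 2 * s)) := by
  obtain ⟨hs0, hs2⟩ := hs
  have hσ0 : (0:ℝ) < 2 * s := by linarith
  have hσ1 : 2 * s < 1 := by linarith
  set m : ℝ := (volume D).toReal with hm_def
  have hm : 0 < m := ENNReal.toReal_pos hDpos.ne' hDfin.ne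
  set q : ℝ := (-(2 * s))⁻¹ with hq_def
  have hq_eq : q = -((2 * s)⁻¹) := by rw [hq_def, inv_neg]
  have hq1 : q < -1 := by
    have : 1 < (2 * s)⁻¹ := (one_lt_inv₀ hσ0).mpr hσ1
    rw [hq_eq]; linarith
  have hqneg : q < 0 := by linarith
  -- the set where the distance vanishes inside D is null
  have hnull : volume {x ∈ D | Metric.infDist x (frontier D) = 0} = 0 := by
    refine le_antisymm (ENNReal.le_of_forall_pos_le_add fun ε hε _ => ?_) zero_le
    rw [zero_add]
    have hε' : (0:ℝ) < ε := hε
    calc volume {x ∈ D | Metric.infDist x (frontier D) = 0}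
        ≤ volume {x ∈ D | Metric.infDist x (frontier D) < ε / P} := by
          apply measure_mono
          rintro x ⟨hx1, hx2⟩
          exact ⟨hx1, by rw [hx2]; positivity⟩
      _ ≤ ENNReal.ofReal (P * (ε / P)) := hlayer _ (by positivity)
      _ = (ε : ℝ≥0∞) := by
          rw [mul_div_cancel₀ _ hP.ne', ENNReal.ofReal_coe_nnreal]
  -- measurability of the real integrand
  have hd : Measurable fun x : EuclideanSpace ℝ (Fin 3) => Metric.infDist x (frontier D) :=
    (Metric.continuous_infDist_pt _).measurable
  have hf : Measurable fun x : EuclideanSpace ℝ (Fin 3) =>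
      Metric.infDist x (frontier D) ^ (-(2 * s)) := by
    have heq : (fun x : EuclideanSpace ℝ (Fin 3) => Metric.infDist x (frontier D) ^ (-(2 * s)))
        = fun x => if Metric.infDist x (frontier D) = 0 then (if -(2 * s) = 0 then 1 else 0)
            else Real.exp (Real.log (Metric.infDist x (frontier D)) * (-(2 * s))) := by
      funext x; rw [Real.rpow_def_of_nonneg Metric.infDist_nonneg]
    rw [heq]
    exact Measurable.ite (hd (measurableSet_singleton 0)) measurable_const
      ((hd.log.mul_const _).exp)
  -- replace the ENNReal integrand by `ofReal` of the real integrand (a.e. on D)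
  have hae : ∀ᵐ x ∂(volume.restrict D),
      (ENNReal.ofReal (Metric.infDist x (frontier D))) ^ (-(2 * s))
        = ENNReal.ofReal (Metric.infDist x (frontier D) ^ (-(2 * s))) := by
    have h2' : ∀ᵐ x, ¬ (x ∈ D ∧ Metric.infDist x (frontier D) = 0) := by
      rw [ae_iff]; simp only [not_not]; exact hnull
    filter_upwards [ae_restrict_mem hDmeas, ae_restrict_of_ae h2'] with x hx1 hx2
    have hdx : 0 < Metric.infDist x (frontier D) :=
      lt_of_le_of_ne Metric.infDist_nonneg (fun h => hx2 ⟨hx1, h.symm⟩)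
    exact ENNReal.ofReal_rpow_of_pos hdx
  rw [lintegral_congr_ae hae,
    lintegral_eq_lintegral_meas_lt _
      (Filter.Eventually.of_forall fun x => Real.rpow_nonneg Metric.infDist_nonneg _)
      hf.aemeasurable]
  -- split the outer integral at t₀
  set t₀ : ℝ := (P / m) ^ (2 * s) with ht₀_def
  have ht₀ : 0 < t₀ := Real.rpow_pos_of_pos (div_pos hP hm) _
  -- pointwise bound for large t
  have hsub : ∀ t : ℝ, 0 < t →
      (volume.restrict D) {a | t < Metric.infDist a (frontier D) ^ (-(2 * s))}
        ≤ ENNReal.ofReal (P * t ^ q) := by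
    intro t ht
    rw [Measure.restrict_apply' hDmeas]
    refine le_trans (measure_mono ?_) (hlayer (t ^ q) (Real.rpow_pos_of_pos ht _))
    rintro x ⟨hxf, hxD⟩
    have hxf' : t < Metric.infDist x (frontier D) ^ (-(2 * s)) := hxf
    have hdx : 0 < Metric.infDist x (frontier D) := by
      rcases (Metric.infDist_nonneg : 0 ≤ Metric.infDist x (frontier D)).lt_or_eq with h | h
      · exact h
      · exfalso
        rw [← h, Real.zero_rpow (by intro hc; nlinarith : -(2 * s) ≠ 0)] at hxf'
        linarith
    refine ⟨hxD, ?_⟩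
    rw [hq_def]
    exact (Real.lt_rpow_inv_iff_of_neg hdx ht (by linarith)).mpr hxf'
  have hsplit : Set.Ioc (0:ℝ) t₀ ∪ Set.Ioi t₀ = Set.Ioi (0:ℝ) :=
    Set.Ioc_union_Ioi_eq_Ioi ht₀.le
  rw [← hsplit, lintegral_union measurableSet_Ioi Set.Ioc_disjoint_Ioi_same]
  -- bound the first piece
  have hIoc : (∫⁻ t in Set.Ioc (0:ℝ) t₀,
      (volume.restrict D) {a | t < Metric.infDist a (frontier D) ^ (-(2 * s))})
      ≤ ENNReal.ofReal (m * t₀) := by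
    calc (∫⁻ t in Set.Ioc (0:ℝ) t₀,
        (volume.restrict D) {a | t < Metric.infDist a (frontier D) ^ (-(2 * s))})
        ≤ ∫⁻ _ in Set.Ioc (0:ℝ) t₀, volume D := by
          refine setLIntegral_mono' measurableSet_Ioc fun t _ => ?_
          calc (volume.restrict D) {a | t < Metric.infDist a (frontier D) ^ (-(2 * s))}
              ≤ (volume.restrict D) Set.univ := measure_mono (Set.subset_univ _)
            _ = volume D := by rw [Measure.restrict_apply_univ]
      _ = volume D * volume (Set.Ioc (0:ℝ) t₀) := setLIntegral_const _ _
      _ = ENNReal.ofReal (m * t₀) := by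
          rw [Real.volume_Ioc, sub_zero, ← ENNReal.ofReal_toReal hDfin.ne, ← hm_def,
            ← ENNReal.ofReal_mul hm.le]
  -- bound the second piece
  have hIoi : (∫⁻ t in Set.Ioi t₀,
      (volume.restrict D) {a | t < Metric.infDist a (frontier D) ^ (-(2 * s))})
      ≤ ENNReal.ofReal (P * (-t₀ ^ (q + 1) / (q + 1))) := by
    calc (∫⁻ t in Set.Ioi t₀,
        (volume.restrict D) {a | t < Metric.infDist a (frontier D) ^ (-(2 * s))})
        ≤ ∫⁻ t in Set.Ioi t₀, ENNReal.ofReal (P * t ^ q) :=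
          setLIntegral_mono' measurableSet_Ioi fun t ht => hsub t (ht₀.trans ht)
      _ = ENNReal.ofReal (∫ t in Set.Ioi t₀, P * t ^ q) := by
          rw [← ofReal_integral_eq_lintegral_ofReal]
          · exact (integrableOn_Ioi_rpow_of_lt hq1 ht₀).const_mul P
          · filter_upwards [ae_restrict_mem measurableSet_Ioi] with t ht
            exact mul_nonneg hP.le (Real.rpow_nonneg (ht₀.trans ht).le _)
      _ = ENNReal.ofReal (P * (-t₀ ^ (q + 1) / (q + 1))) := by
          rw [MeasureTheory.integral_const_mul, integral_Ioi_rpow_of_lt hq1 ht₀]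
  refine le_trans (add_le_add hIoc hIoi) ?_
  -- final real arithmetic
  have hq1' : q + 1 < 0 := by linarith
  have htq : 0 < -t₀ ^ (q + 1) / (q + 1) := by
    have h := Real.rpow_pos_of_pos ht₀ (q + 1)
    exact div_pos_of_neg_of_neg (by linarith) hq1'
  rw [← ENNReal.ofReal_add (by positivity) (mul_nonneg hP.le htq.le)]
  apply ENNReal.ofReal_le_ofReal
  apply le_of_eq
  -- identities
  have e2 : t₀ ^ (q + 1) = t₀ * m / P := by
    rw [ht₀_def, ← Real.rpow_mul (div_pos hP hm).le]
    have hexp : (2 * s) * (q + 1) = 2 * s - 1 := by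
      rw [hq_eq]; field_simp; ring
    rw [hexp, Real.rpow_sub (div_pos hP hm), Real.rpow_one]
    field_simp [ht₀_def]
  have e1 : t₀ = P ^ (2 * s) / m ^ (2 * s) := by
    rw [ht₀_def, Real.div_rpow hP.le hm.le]
  have e3 : m ^ (1 - 2 * s) = m / m ^ (2 * s) := by
    rw [Real.rpow_sub hm, Real.rpow_one]
  have hq2 : q + 1 = (2 * s - 1) / (2 * s) := by
    rw [hq_eq]; field_simp; ring
  have hmσ : (0:ℝ) < m ^ (2 * s) := Real.rpow_pos_of_pos hm _
  rw [e2, e3, hq2, e1]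
  have h1 : (2:ℝ) * s ≠ 0 := hσ0.ne'
  have h2 : (2:ℝ) * s - 1 ≠ 0 := by linarith
  have h3 : (1:ℝ) - 2 * s ≠ 0 := by linarith
  field_simp
  ring
end
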